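/- Let K ≥ 1, Q a positive multiple of K, and θ_1 ≤ θ_2 ≤ ... ≤ θ_N positive integers with θ_n ≤ K, average r = (∑_n θ_n)/N. Define σ_n = (Q/K)·(K - θ_n)/min{2θ_n, K} and C_n = (Q/K)(K - θ_n). Then ∑_{n=1}^N σ_n ≥ (∑_{n=1}^N C_n)/min{2r, K} = Q·N·(1 - r/K)/min{2r, K}. -/

import Mathlib

/-- Asymmetric converse: σ_sum ≥ C_total / min{2r, K} = Q·N·(1-r/K)/min{2r,K}. -/
theorem sigma_sum_bound (K Q N : ℕ) (hK : 1 ≤ K) (hQ : 0 < Q) (hdvd : K ∣ Q)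
    (hN : 0 < N) (θ : Fin N → ℕ) (hmono : Monotone θ)
    (hpos : ∀ n, 0 < θ n) (hle : ∀ n, θ n ≤ K) (r : ℝ)
    (hr : r = (∑ n, (θ n : ℝ)) / N) :
    (∑ n, ((Q : ℝ) / K) * ((K : ℝ) - θ n) / ((min (2 * θ n) K : ℕ) : ℝ))
      ≥ (∑ n, ((Q : ℝ) / K) * ((K : ℝ) - θ n)) / min (2 * r) (K : ℝ) ∧
    (∑ n, ((Q : ℝ) / K) * ((K : ℝ) - θ n)) / min (2 * r) (K : ℝ)
      = (Q : ℝ) * N * (1 - r / K) / min (2 * r) (K : ℝ) := by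
  have hKpos : (0:ℝ) < K := by exact_mod_cast hK
  have hNpos : (0:ℝ) < N := by exact_mod_cast hN
  -- r > 0
  have hθ1 : ∀ n, (1:ℝ) ≤ (θ n : ℝ) := fun n => by exact_mod_cast hpos n
  have hsumθ : (N:ℝ) ≤ ∑ n, (θ n : ℝ) := by
    calc (N:ℝ) = ∑ _n : Fin N, (1:ℝ) := by simp
    _ ≤ ∑ n, (θ n : ℝ) := Finset.sum_le_sum fun n _ => hθ1 n
  have hrpos : 0 < r := by
    rw [hr]
    exact div_pos (lt_of_lt_of_le hNpos hsumθ) hNpos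
  have hMpos : 0 < min (2 * r) (K : ℝ) := lt_min (by linarith) hKpos
  -- abbreviations
  set m : Fin N → ℝ := fun n => ((min (2 * θ n) K : ℕ) : ℝ) with hm
  set f : Fin N → ℝ := fun n => ((Q : ℝ) / K) * ((K : ℝ) - θ n) / m n with hf
  have hmpos : ∀ n, 0 < m n := fun n => by
    have h : 0 < min (2 * θ n) K := lt_min (by have := hpos n; omega) (by omega)
    simp only [hm]
    exact_mod_cast h
  have hfm : ∀ n, f n * m n = ((Q : ℝ) / K) * ((K : ℝ) - θ n) := fun n =>
    div_mul_cancel₀ _ (hmpos n).ne'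
  -- f and m antivary
  have hanti : Antivary f m := by
    intro i j hij
    have hθij : θ i < θ j := by
      by_contra h
      push_neg at h
      have hmm : m j ≤ m i := by
        have h2 : min (2 * θ j) K ≤ min (2 * θ i) K := by omega
        simp only [hm]
        exact_mod_cast h2
      exact absurd hij (not_lt.mpr hmm)
    have h1 : (K:ℝ) - θ j ≤ (K:ℝ) - θ i := by
      have : (θ i : ℝ) ≤ θ j := by exact_mod_cast hθij.le
      linarith
    have h2 : 0 ≤ (K:ℝ) - θ j := by
      have : (θ j : ℝ) ≤ K := by exact_mod_cast hle j
      linarith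
    have hQK : 0 ≤ (Q:ℝ)/K := div_nonneg (by positivity) hKpos.le
    simp only [hf]
    exact div_le_div₀ (mul_nonneg hQK (by linarith)) (by nlinarith) (hmpos i) hij.le
  -- Chebyshev
  have hcheb : (N:ℝ) * ∑ n, f n * m n ≤ (∑ n, f n) * ∑ n, m n := by
    have := hanti.card_mul_sum_le_sum_mul_sum
    simpa using this
  have hfnonneg : ∀ n, 0 ≤ f n := fun n => by
    have : (θ n : ℝ) ≤ K := by exact_mod_cast hle n
    have hQK : 0 ≤ (Q:ℝ)/K := div_nonneg (by positivity) hKpos.le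
    exact div_nonneg (mul_nonneg hQK (by linarith)) (hmpos n).le
  have hsumf : 0 ≤ ∑ n, f n := Finset.sum_nonneg fun n _ => hfnonneg n
  -- ∑ m ≤ N * min(2r, K)
  have hsummle : ∑ n, m n ≤ (N:ℝ) * min (2 * r) (K:ℝ) := by
    have h1 : ∑ n, m n ≤ (N:ℝ) * (2 * r) := by
      have hh : ∑ n, m n ≤ ∑ n, 2 * (θ n : ℝ) := by
        apply Finset.sum_le_sum
        intro n _
        have h3 : (min (2 * θ n) K : ℕ) ≤ 2 * θ n := min_le_left _ _
        simp only [hm]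
        push_cast
        exact_mod_cast h3
      calc ∑ n, m n ≤ ∑ n, 2 * (θ n : ℝ) := hh
      _ = 2 * ∑ n, (θ n : ℝ) := by rw [Finset.mul_sum]
      _ = (N:ℝ) * (2 * r) := by rw [hr]; field_simp
    have h2 : ∑ n, m n ≤ (N:ℝ) * K := by
      have hh : ∑ n, m n ≤ ∑ _n : Fin N, (K:ℝ) := by
        apply Finset.sum_le_sum
        intro n _
        have h4 : (min (2 * θ n) K : ℕ) ≤ K := min_le_right _ _
        simp only [hm]
        exact_mod_cast h4
      simpa using hh
    rcases le_total (2 * r) (K:ℝ) with h | h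
    · rw [min_eq_left h]; exact h1
    · rw [min_eq_right h]; exact h2
  -- key: ∑ C ≤ (∑ f) * min(2r,K)
  have hkey : ∑ n, ((Q : ℝ) / K) * ((K : ℝ) - θ n) ≤ (∑ n, f n) * min (2 * r) (K:ℝ) := by
    have h1 : (N:ℝ) * ∑ n, ((Q : ℝ) / K) * ((K : ℝ) - θ n) ≤ (∑ n, f n) * ((N:ℝ) * min (2 * r) (K:ℝ)) := by
      calc (N:ℝ) * ∑ n, ((Q : ℝ) / K) * ((K : ℝ) - θ n) = (N:ℝ) * ∑ n, f n * m n := by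
            congr 1; exact Finset.sum_congr rfl fun n _ => (hfm n).symm
      _ ≤ (∑ n, f n) * ∑ n, m n := hcheb
      _ ≤ (∑ n, f n) * ((N:ℝ) * min (2 * r) (K:ℝ)) := by
            exact mul_le_mul_of_nonneg_left hsummle hsumf
    nlinarith
  constructor
  · rw [ge_iff_le, div_le_iff₀ hMpos]
    exact hkey
  · congr 1
    have hsum : ∑ n, (θ n : ℝ) = N * r := by rw [hr]; field_simp
    calc ∑ n, (Q:ℝ)/K*((K:ℝ)- θ n) = (Q:ℝ)/K * ∑ n, ((K:ℝ)- θ n) := by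
          rw [Finset.mul_sum]
    _ = (Q:ℝ)/K * ((N:ℝ)*K - (N:ℝ)*r) := by
          rw [Finset.sum_sub_distrib, hsum]; simp [mul_comm]
    _ = (Q:ℝ) * N * (1 - r/K) := by field_simp
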